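/- Let ξ ∈ H with ξ ≠ 0 and a = Real.sqrt (1 + ‖ξ‖²). The bounded operator A on H defined by A x = x + ((a−1)/‖ξ‖²)·⟨x,ξ⟩·ξ is a positive operator satisfying A ∘ A = S, where S x = x + ⟨x,ξ⟩·ξ; moreover A ξ = a·ξ and A y = y for every y ∈ H with ⟨y,ξ⟩ = 0. -/

import Mathlib

open scoped InnerProductSpace

/-- For `ξ ≠ 0` and `a = √(1 + ‖ξ‖²)`, the bounded operator
`A x = x + ((a−1)/‖ξ‖²)·⟨x,ξ⟩·ξ` (inner product linear in the first slot, i.e. `⟪ξ,x⟫_ℂ` in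
Mathlib's convention) is a positive operator with `A ∘ A = S` where `S x = x + ⟨x,ξ⟩·ξ`;
moreover `A ξ = a·ξ` and `A y = y` whenever `⟨y,ξ⟩ = 0`. -/
theorem stmt2 {H : Type*} [NormedAddCommGroup H] [InnerProductSpace ℂ H] [CompleteSpace H]
    (ξ : H) (hξ : ξ ≠ 0) (a : ℝ) (ha : a = Real.sqrt (1 + ‖ξ‖ ^ 2))
    (A : H →L[ℂ] H)
    (hA : ∀ x : H, A x = x + ((((a - 1) / ‖ξ‖ ^ 2 : ℝ) : ℂ) * ⟪ξ, x⟫_ℂ) • ξ)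
    (S : H →L[ℂ] H) (hS : ∀ x : H, S x = x + ⟪ξ, x⟫_ℂ • ξ) :
    A.IsPositive ∧ A ∘L A = S ∧ A ξ = (a : ℂ) • ξ ∧
      ∀ y : H, ⟪ξ, y⟫_ℂ = 0 → A y = y := by
  have hn : (0:ℝ) < ‖ξ‖ ^ 2 := pow_pos (norm_pos_iff.mpr hξ) 2
  have ha1 : 1 ≤ a := by
    rw [ha]
    have := Real.sqrt_le_sqrt (show (1:ℝ) ≤ 1 + ‖ξ‖ ^ 2 by linarith)
    simp only [Real.sqrt_one] at this; exact this
  have ha2 : a ^ 2 = 1 + ‖ξ‖ ^ 2 := by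
    rw [ha, Real.sq_sqrt (by positivity)]
  set c : ℝ := (a - 1) / ‖ξ‖ ^ 2 with hc
  have hc0 : 0 ≤ c := div_nonneg (by linarith) hn.le
  have hcn : c * ‖ξ‖ ^ 2 = a - 1 := by rw [hc]; exact div_mul_cancel₀ _ hn.ne'
  have hkey : 2 * c + c ^ 2 * ‖ξ‖ ^ 2 = 1 := by
    have : c * (a + 1) = 1 := by
      rw [hc]; field_simp; nlinarith [ha2]
    nlinarith [hcn]
  have hinner : ⟪ξ, ξ⟫_ℂ = ((‖ξ‖ ^ 2 : ℝ) : ℂ) := by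
    rw [inner_self_eq_norm_sq_to_K]; norm_num
  have hAxi : A ξ = (a : ℂ) • ξ := by
    rw [hA, hinner, ← smul_smul]
    rw [show (((a - 1) / ‖ξ‖ ^ 2 : ℝ) : ℂ) • (((‖ξ‖ ^ 2 : ℝ) : ℂ) • ξ)
        = (((a - 1 : ℝ)) : ℂ) • ξ by
      rw [smul_smul, ← Complex.ofReal_mul, div_mul_cancel₀]
      exact_mod_cast hn.ne']
    push_cast
    rw [sub_smul, one_smul]
    abel
  refine ⟨⟨?_, ?_⟩, ?_, hAxi, ?_⟩
  · intro x y
    simp only [ContinuousLinearMap.coe_coe, hA, inner_add_left, inner_add_right,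
      inner_smul_left, inner_smul_right, map_mul, Complex.conj_ofReal, inner_conj_symm]
    ring
  · intro x
    rw [ContinuousLinearMap.reApplyInnerSelf, hA]
    simp only [inner_add_left, inner_smul_left, map_mul, Complex.conj_ofReal, inner_conj_symm]
    have h1 : ⟪ξ, x⟫_ℂ * ⟪x, ξ⟫_ℂ = ((‖⟪ξ, x⟫_ℂ‖ ^ 2 : ℝ) : ℂ) := by
      rw [← inner_conj_symm x ξ, mul_comm, Complex.conj_mul']
      norm_num
    have h2 : RCLike.re ⟪x, x⟫_ℂ = ‖x‖ ^ 2 := inner_self_eq_norm_sq x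
    have h3 : (((a - 1) / ‖ξ‖ ^ 2 : ℝ) : ℂ) * ⟪x, ξ⟫_ℂ * ⟪ξ, x⟫_ℂ
        = ((((a - 1) / ‖ξ‖ ^ 2) * ‖⟪ξ, x⟫_ℂ‖ ^ 2 : ℝ) : ℂ) := by
      rw [mul_assoc, mul_comm ⟪x, ξ⟫_ℂ, h1]; push_cast; ring
    rw [map_add, h3, h2]
    have h4 : RCLike.re ((((((a - 1) / ‖ξ‖ ^ 2) * ‖⟪ξ, x⟫_ℂ‖ ^ 2 : ℝ)) : ℂ))
        = ((a - 1) / ‖ξ‖ ^ 2) * ‖⟪ξ, x⟫_ℂ‖ ^ 2 := RCLike.ofReal_re _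
    rw [h4]
    have : 0 ≤ ((a - 1) / ‖ξ‖ ^ 2) * ‖⟪ξ, x⟫_ℂ‖ ^ 2 :=
      mul_nonneg hc0 (by positivity)
    positivity
  · ext x
    simp only [ContinuousLinearMap.comp_apply, hA, hS]
    rw [inner_add_right, inner_smul_right, hinner]
    rw [add_assoc, ← add_smul]
    have hcast : ((2 * c + c ^ 2 * ‖ξ‖ ^ 2 : ℝ) : ℂ) = 1 := by rw [hkey]; norm_num
    have hsc : ((c : ℂ) * ⟪ξ, x⟫_ℂ + (c : ℂ) * (⟪ξ, x⟫_ℂ + (c : ℂ) * ⟪ξ, x⟫_ℂ * ((‖ξ‖ ^ 2 : ℝ) : ℂ)) : ℂ)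
        = ⟪ξ, x⟫_ℂ := by
      push_cast at hcast ⊢
      linear_combination ⟪ξ, x⟫_ℂ * hcast
    rw [hsc]
  · intro y hy
    rw [hA, hy]
    simp
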